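/- Let X = [0,1]^{n} ⊆ ℝ^{n}, let φ : ℝ^{n} → ℝ be convex on X, and let s : X → ℝ^{n} be a subgradient selection for φ on X (so s(x) is a subgradient of φ at x for every x ∈ X) satisfying ‖s(x)‖_∞ ≤ L for all x ∈ X, where L > 0. Let t > 0, set R_t = 1 + 2tL, and let ε ∈ (0, 9 n R_t²]. Then there exists a finite set S ⊆ X with |S| ≤ (9 n R_t² / ε)^{n/2} such that for every x ∈ X there exists x̂ ∈ S with ‖x − x̂‖² + t² ‖s(x) − s(x̂)‖² ≤ ε; in particular ‖x − x̂‖ ≤ √ε and ‖s(x) − s(x̂)‖ ≤ √ε / t. -/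

import Mathlib

open scoped RealInnerProductSpace

/-- covering of the graph of a bounded subgradient selection of a convex function
over the unit cube: there is a set `S` of cardinality at most `(9 n R_t² / ε)^{n/2}` such that
every point of the cube is `√ε`-close to a point of `S` both in position and (after scaling by
`t`) in subgradient value. -/
theorem sg_aux (n : ℕ) (x y sx sy : EuclideanSpace ℝ (Fin n)) (t ε h : ℝ)
    (ht : 0 < t) (hh0 : 0 ≤ h)
    (hmono : 0 ≤ ⟪sx - sy, x - y⟫)
    (hcoord : ∀ i, |(x i + t * sx i) - (y i + t * sy i)| ≤ h)
    (hnh : (n : ℝ) * h ^ 2 = ε) :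
    ‖x - y‖ ^ 2 + t ^ 2 * ‖sx - sy‖ ^ 2 ≤ ε := by
  obtain ⟨z, hzdef⟩ : ∃ z : EuclideanSpace ℝ (Fin n),
      z = (x - y) + t • (sx - sy) := ⟨_, rfl⟩
  have hz2 : ‖z‖ ^ 2 ≤ ε := by
    have hzsq : ‖z‖ ^ 2 = ∑ i, ‖z i‖ ^ 2 := by
      rw [EuclideanSpace.norm_eq, Real.sq_sqrt (by positivity)]
    rw [hzsq]
    have hterm : ∀ i : Fin n, ‖z i‖ ^ 2 ≤ h ^ 2 := by
      intro i
      have hb := hcoord i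
      have hzi : z i = (x i + t * sx i) - (y i + t * sy i) := by
        rw [hzdef]
        simp only [PiLp.add_apply, PiLp.sub_apply, PiLp.smul_apply, smul_eq_mul]
        ring
      rw [hzi, Real.norm_eq_abs]
      exact pow_le_pow_left₀ (abs_nonneg _) hb 2
    calc ∑ i, ‖z i‖ ^ 2 ≤ ∑ _i : Fin n, h ^ 2 :=
          Finset.sum_le_sum (fun i _ => hterm i)
      _ = n * h ^ 2 := by
          rw [Finset.sum_const, Finset.card_univ, Fintype.card_fin, nsmul_eq_mul]
      _ = ε := hnh
  have hexp : ‖z‖ ^ 2 =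
      ‖x - y‖ ^ 2 + 2 * (t * ⟪x - y, sx - sy⟫) + t ^ 2 * ‖sx - sy‖ ^ 2 := by
    rw [hzdef, norm_add_sq_real, real_inner_smul_right, norm_smul,
      Real.norm_eq_abs, mul_pow, sq_abs]
  have hcross : 0 ≤ t * ⟪x - y, sx - sy⟫ := by
    rw [real_inner_comm]
    exact mul_nonneg ht.le hmono
  calc ‖x - y‖ ^ 2 + t ^ 2 * ‖sx - sy‖ ^ 2
      ≤ ‖x - y‖ ^ 2 + 2 * (t * ⟪x - y, sx - sy⟫) + t ^ 2 * ‖sx - sy‖ ^ 2 := by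
        linarith [hcross]
    _ = ‖z‖ ^ 2 := hexp.symm
    _ ≤ ε := hz2



set_option maxHeartbeats 1600000 in
theorem subgradient_net_exists (n : ℕ)
    (φ : EuclideanSpace ℝ (Fin n) → ℝ)
    (hφ : ConvexOn ℝ {x : EuclideanSpace ℝ (Fin n) | ∀ i, x i ∈ Set.Icc (0:ℝ) 1} φ)
    (s : EuclideanSpace ℝ (Fin n) → EuclideanSpace ℝ (Fin n))
    (hs : ∀ x ∈ {x : EuclideanSpace ℝ (Fin n) | ∀ i, x i ∈ Set.Icc (0:ℝ) 1},
      ∀ u ∈ {x : EuclideanSpace ℝ (Fin n) | ∀ i, x i ∈ Set.Icc (0:ℝ) 1},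
        φ x + ⟪s x, u - x⟫ ≤ φ u)
    (L : ℝ) (hL : 0 < L)
    (hsL : ∀ x ∈ {x : EuclideanSpace ℝ (Fin n) | ∀ i, x i ∈ Set.Icc (0:ℝ) 1},
      ∀ i, |s x i| ≤ L)
    (t : ℝ) (ht : 0 < t)
    (ε : ℝ) (hε : ε ∈ Set.Ioc (0:ℝ) (9 * n * (1 + 2 * t * L) ^ 2)) :
    ∃ S : Finset (EuclideanSpace ℝ (Fin n)),
      (↑S ⊆ {x : EuclideanSpace ℝ (Fin n) | ∀ i, x i ∈ Set.Icc (0:ℝ) 1}) ∧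
      (S.card : ℝ) ≤ (9 * n * (1 + 2 * t * L) ^ 2 / ε) ^ ((n : ℝ) / 2) ∧
      ∀ x ∈ {x : EuclideanSpace ℝ (Fin n) | ∀ i, x i ∈ Set.Icc (0:ℝ) 1},
        ∃ xh ∈ S, ‖x - xh‖ ^ 2 + t ^ 2 * ‖s x - s xh‖ ^ 2 ≤ ε ∧
          ‖x - xh‖ ≤ Real.sqrt ε ∧ ‖s x - s xh‖ ≤ Real.sqrt ε / t := by
  classical
  obtain ⟨hε0, hεle⟩ := hε
  rcases Nat.eq_zero_or_pos n with hn | hn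
  · exfalso
    subst hn
    norm_num at hεle
    linarith
  set X := {x : EuclideanSpace ℝ (Fin n) | ∀ i, x i ∈ Set.Icc (0:ℝ) 1} with hX
  set R : ℝ := 1 + 2 * t * L with hRdef
  have hR0 : 0 < R := by positivity
  have hn0 : (0:ℝ) < n := by exact_mod_cast hn
  set h : ℝ := Real.sqrt ε / Real.sqrt n with hhdef
  have hh0 : 0 < h := div_pos (Real.sqrt_pos.mpr hε0) (Real.sqrt_pos.mpr hn0)
  have hh2 : h ^ 2 = ε / n := by
    rw [hhdef, div_pow, Real.sq_sqrt hε0.le, Real.sq_sqrt hn0.le]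
  set a : ℝ := R / h with hadef
  have ha0 : 0 < a := div_pos hR0 hh0
  set m : ℕ := ⌈a⌉₊ with hmdef
  have hm1 : 1 ≤ m := Nat.one_le_ceil_iff.mpr ha0
  -- a ≥ 1/3
  have hsqε : Real.sqrt ε ≤ 3 * Real.sqrt n * R := by
    have h9 : (9:ℝ) * n * R ^ 2 = (3 * Real.sqrt n * R) ^ 2 := by
      rw [mul_pow, mul_pow, Real.sq_sqrt hn0.le]; ring
    calc Real.sqrt ε ≤ Real.sqrt (9 * n * R ^ 2) := Real.sqrt_le_sqrt hεle
      _ = 3 * Real.sqrt n * R := by rw [h9, Real.sqrt_sq (by positivity)]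
  have ha3 : 1 / 3 ≤ a := by
    rw [hadef, hhdef, div_div_eq_mul_div, le_div_iff₀ (Real.sqrt_pos.mpr hε0)]
    nlinarith [Real.sqrt_pos.mpr hn0, hR0]
  have hm3a : (m : ℝ) ≤ 3 * a := by
    rcases le_or_gt a 1 with h1 | h1
    · have hm' : m ≤ 1 := Nat.ceil_le.mpr (by exact_mod_cast h1)
      have : (m : ℝ) ≤ 1 := by exact_mod_cast hm'
      linarith
    · have := Nat.ceil_lt_add_one ha0.le
      rw [← hmdef] at this
      linarith
  -- cell index map
  let g : EuclideanSpace ℝ (Fin n) → (Fin n → Fin m) := fun x i =>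
    ⟨min (⌊(x i + t * s x i + t * L) / h⌋.toNat) (m - 1),
      lt_of_le_of_lt (min_le_right _ _) (by omega)⟩
  have hXmem : ∀ x ∈ X, ∀ i : Fin n,
      0 ≤ x i + t * s x i + t * L ∧ x i + t * s x i + t * L ≤ R := by
    intro x hx i
    have h1 := (hx i).1
    have h2 := (hx i).2
    have h3 := abs_le.mp (hsL x hx i)
    constructor <;> nlinarith [h3.1, h3.2]
  have hRm : R ≤ m * h := by
    have hma : a ≤ (m : ℝ) := Nat.le_ceil a
    have : R = a * h := by rw [hadef]; field_simp
    nlinarith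
  have hcell : ∀ x ∈ X, ∀ i : Fin n,
      ((g x i : ℕ) : ℝ) * h ≤ x i + t * s x i + t * L ∧
      x i + t * s x i + t * L ≤ (((g x i : ℕ) : ℝ) + 1) * h := by
    intro x hx i
    obtain ⟨hv0, hvR⟩ := hXmem x hx i
    set v := x i + t * s x i + t * L with hvdef
    have hfl : (0:ℤ) ≤ ⌊v / h⌋ := Int.floor_nonneg.mpr (by positivity)
    have hcast : ((⌊v / h⌋.toNat : ℕ) : ℝ) = (⌊v / h⌋ : ℝ) := by
      exact_mod_cast Int.toNat_of_nonneg hfl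
    rcases le_or_gt (⌊v / h⌋.toNat) (m - 1) with hc | hc
    · have hk : ((g x i : ℕ)) = ⌊v / h⌋.toNat := min_eq_left hc
      rw [hk, hcast]
      constructor
      · rw [← le_div_iff₀ hh0] at *
        exact Int.floor_le _
      · have := Int.lt_floor_add_one (v / h)
        rw [div_lt_iff₀ hh0] at this
        linarith
    · have hk : ((g x i : ℕ)) = m - 1 := min_eq_right hc.le
      rw [hk]
      have hcm : ((m - 1 : ℕ) : ℝ) = (m : ℝ) - 1 := by
        have : (1:ℕ) ≤ m := hm1
        push_cast [Nat.cast_sub this]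
        ring
      rw [hcm]
      constructor
      · have hge : (m : ℝ) ≤ (⌊v / h⌋ : ℝ) := by
          rw [← hcast]
          exact_mod_cast by omega
        have hfle : (⌊v / h⌋ : ℝ) ≤ v / h := Int.floor_le _
        have : (m : ℝ) - 1 ≤ v / h := by linarith
        rw [le_div_iff₀ hh0] at this
        linarith
      · have : ((m : ℝ) - 1 + 1) * h = m * h := by ring
        rw [this]
        linarith
  have hzbound : ∀ x ∈ X, ∀ y ∈ X, g x = g y → ∀ i : Fin n,
      |(x i + t * s x i) - (y i + t * s y i)| ≤ h := by
    intro x hx y hy hg i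
    obtain ⟨h1, h2⟩ := hcell x hx i
    obtain ⟨h3, h4⟩ := hcell y hy i
    rw [hg] at h1 h2
    rw [abs_le]
    constructor <;> linarith
  have hmain : ∀ x ∈ X, ∀ y ∈ X, g x = g y →
      ‖x - y‖ ^ 2 + t ^ 2 * ‖s x - s y‖ ^ 2 ≤ ε := by
    intro x hx y hy hg
    have hmono : 0 ≤ ⟪s x - s y, x - y⟫ := by
      have h1 := hs x hx y hy
      have h2 := hs y hy x hx
      have e2 : ⟪s x, x - y⟫ = -⟪s x, y - x⟫ := by
        rw [← inner_neg_right, neg_sub]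
      rw [inner_sub_left, e2]
      linarith
    have hnh : (n : ℝ) * h ^ 2 = ε := by rw [hh2]; field_simp
    exact sg_aux n x y (s x) (s y) t ε h ht hh0.le hmono (hzbound x hx y hy hg) hnh
  -- representatives
  let P : (Fin n → Fin m) → Prop := fun c => ∃ x, x ∈ X ∧ g x = c
  let rep : (Fin n → Fin m) → EuclideanSpace ℝ (Fin n) := fun c =>
    if hc : P c then hc.choose else 0
  have hrep : ∀ c, P c → rep c ∈ X ∧ g (rep c) = c := by
    intro c hc
    simp only [rep, dif_pos hc]
    exact hc.choose_spec
  let S : Finset (EuclideanSpace ℝ (Fin n)) :=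
    (Finset.univ.filter P).image rep
  have hmemS : ∀ c, P c → rep c ∈ S := by
    intro c hc
    exact Finset.mem_image.mpr ⟨c, Finset.mem_filter.mpr ⟨Finset.mem_univ _, hc⟩, rfl⟩
  refine ⟨S, ?_, ?_, ?_⟩
  · intro y hy
    obtain ⟨c, hc, rfl⟩ := Finset.mem_image.mp hy
    exact (hrep c (Finset.mem_filter.mp hc).2).1
  · have hcard : S.card ≤ m ^ n := by
      calc S.card ≤ (Finset.univ.filter P).card := Finset.card_image_le
        _ ≤ (Finset.univ : Finset (Fin n → Fin m)).card := Finset.card_filter_le _ _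
        _ = m ^ n := by simp
    have ha2 : a ^ 2 * ε = (n : ℝ) * R ^ 2 := by
      rw [hadef, div_pow, hh2]
      field_simp
    have hBpos : 0 < 9 * (n:ℝ) * R ^ 2 / ε := by positivity
    have hsq : (m : ℝ) ≤ Real.sqrt (9 * n * R ^ 2 / ε) := by
      have h3a : (3 * a) ^ 2 = 9 * (n:ℝ) * R ^ 2 / ε := by
        rw [eq_div_iff (ne_of_gt hε0)]
        nlinarith [ha2]
      rw [← h3a, Real.sqrt_sq (by positivity)]
      exact hm3a
    calc (S.card : ℝ) ≤ ((m : ℝ)) ^ n := by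
          have : ((m ^ n : ℕ) : ℝ) = ((m:ℝ)) ^ n := by push_cast; ring
          rw [← this]
          exact_mod_cast hcard
      _ ≤ (Real.sqrt (9 * n * R ^ 2 / ε)) ^ n := by
          exact pow_le_pow_left₀ (by positivity) hsq n
      _ = (9 * n * R ^ 2 / ε) ^ ((n : ℝ) / 2) := by
          rw [Real.sqrt_eq_rpow, ← Real.rpow_natCast ((9 * (n:ℝ) * R ^ 2 / ε) ^ ((1:ℝ)/2)) n,
            ← Real.rpow_mul hBpos.le]
          norm_num
          rw [div_mul_eq_mul_div, one_mul]
  · intro x hx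
    have hPc : P (g x) := ⟨x, hx, rfl⟩
    obtain ⟨hxhX, hgxh⟩ := hrep (g x) hPc
    refine ⟨rep (g x), hmemS _ hPc, ?_⟩
    have hkey := hmain x hx (rep (g x)) hxhX hgxh.symm
    refine ⟨hkey, ?_, ?_⟩
    · have h1 : ‖x - rep (g x)‖ ^ 2 ≤ ε := by nlinarith [sq_nonneg (‖s x - s (rep (g x))‖), sq_nonneg t, norm_nonneg (s x - s (rep (g x)))]
      calc ‖x - rep (g x)‖ = Real.sqrt (‖x - rep (g x)‖ ^ 2) := by
            rw [Real.sqrt_sq (norm_nonneg _)]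
        _ ≤ Real.sqrt ε := Real.sqrt_le_sqrt h1
    · have h2 : t ^ 2 * ‖s x - s (rep (g x))‖ ^ 2 ≤ ε := by
        nlinarith [sq_nonneg ‖x - rep (g x)‖]
      rw [le_div_iff₀ ht]
      have : ‖s x - s (rep (g x))‖ * t = Real.sqrt (t ^ 2 * ‖s x - s (rep (g x))‖ ^ 2) := by
        rw [Real.sqrt_mul (sq_nonneg t), Real.sqrt_sq ht.le, Real.sqrt_sq (norm_nonneg _)]
        ring
      rw [this]
      exact Real.sqrt_le_sqrt h2
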